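/- Let Ω ⊆ ℝ^n be open, δ > 0, h > 0, and let E be a compact set with Per_K(E) < ∞ which is strongly K-outward minimizing in Ω with constant δ, and such that {x : dist(x,E) < δh} ⊆ Ω. Let T be an ATW minimizer for E at step h with |T∖E| = 0. Then for every z ∈ ℝ^n with |z| < δh one has |(T+z)∖E| = 0 (equivalently, the set of Lebesgue density-one points of T translated by any vector of norm < δh is contained in E up to a null set). In particular, if the interior of E is empty, then |T| = 0. -/

import Mathlib

open MeasureTheory Set Filter Metric Topology
open scoped ENNReal Pointwise

noncomputable section

abbrev Euc (n : ℕ) := EuclideanSpace ℝ (Fin n)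

/-- Admissible kernel: measurable, nonnegative and even away from the origin,
with `∫ min(1,|x|) K(x) dx < ∞`. -/
def KernelOK {n : ℕ} (K : Euc n → ℝ) : Prop :=
  Measurable K ∧ (∀ x : Euc n, x ≠ 0 → 0 ≤ K x) ∧ (∀ x : Euc n, x ≠ 0 → K (-x) = K x) ∧
    (∫⁻ x : Euc n, ENNReal.ofReal (min 1 ‖x‖ * K x)) < ⊤

/-- The `K`-perimeter of `E` in `Ω`. -/
def perK {n : ℕ} (K : Euc n → ℝ) (E Ω : Set (Euc n)) : ℝ≥0∞ :=
  (∫⁻ x in E, ∫⁻ y in Ω \ E, ENNReal.ofReal (K (x - y))) +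
  (∫⁻ x in E ∩ Ω, ∫⁻ y in (Ω ∪ E)ᶜ, ENNReal.ofReal (K (x - y)))

/-- The (total) `K`-perimeter of `E`. -/
def perKtot {n : ℕ} (K : Euc n → ℝ) (E : Set (Euc n)) : ℝ≥0∞ :=
  ∫⁻ x in E, ∫⁻ y in Eᶜ, ENNReal.ofReal (K (x - y))

/-- `A` is compactly contained in `Ω`. -/
def CptIn {n : ℕ} (A Ω : Set (Euc n)) : Prop :=
  IsCompact (closure A) ∧ closure A ⊆ Ω

/-- `E` is `K`-outward minimizing in `Ω`. -/
def OutMin {n : ℕ} (K : Euc n → ℝ) (E Ω : Set (Euc n)) : Prop :=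
  ∀ F : Set (Euc n), MeasurableSet F → E ⊆ F → CptIn (F \ E) Ω →
    perK K E Ω ≤ perK K F Ω

/-- `E` is strongly `K`-outward minimizing in `Ω` with constant `δ`. -/
def StrongOutMin {n : ℕ} (K : Euc n → ℝ) (δ : ℝ) (E Ω : Set (Euc n)) : Prop :=
  ∀ F : Set (Euc n), MeasurableSet F → E ⊆ F → CptIn (F \ E) Ω →
    perK K E Ω + ENNReal.ofReal δ * volume (F \ E) ≤ perK K F Ω

end
noncomputable section
open MeasureTheory Set Filter Metric Topology
open scoped ENNReal Pointwise

/-- The truncated `K`-curvature of `G` at `x`, with truncation parameter `ε`: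
`∫_{ℝⁿ∖B(x,ε)} (χ_{Gᶜ}(y) − χ_G(y)) K(x−y) dy`. -/
def truncCurv {n : ℕ} (K : Euc n → ℝ) (G : Set (Euc n)) (x : Euc n) (ε : ℝ) : ℝ :=
  ∫ y in (Metric.ball x ε)ᶜ,
    ((Gᶜ).indicator (fun _ => (1:ℝ)) y - G.indicator (fun _ => (1:ℝ)) y) * K (x - y)

/-- `G` has compact boundary of class `C^{1,1}`: the boundary is compact, and `G` is the
sublevel set of a `C^1` function with Lipschitz gradient which is nondegenerate on the
boundary. -/
def HasCptC11Boundary {n : ℕ} (G : Set (Euc n)) : Prop :=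
  IsCompact (frontier G) ∧
  ∃ φ : Euc n → ℝ, ContDiff ℝ 1 φ ∧ (∃ L : NNReal, LipschitzWith L (fderiv ℝ φ)) ∧
    G = {x | φ x ≤ 0} ∧ frontier G = {x | φ x = 0} ∧
    ∀ x ∈ frontier G, fderiv ℝ φ x ≠ 0

/-- `H^K_A(x) ≥ c` in the viscosity sense: every set `G` with compact `C^{1,1}` boundary
with `G ⊆ A` and `x ∈ ∂G` has `K`-curvature at least `c` at `x` (the curvature being the
limit of the truncated curvatures). -/
def ViscCurvGE {n : ℕ} (K : Euc n → ℝ) (A : Set (Euc n)) (x : Euc n) (c : ℝ) : Prop :=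
  ∀ G : Set (Euc n), HasCptC11Boundary G → G ⊆ A → x ∈ frontier G →
    ∀ L : ℝ, Tendsto (truncCurv K G x) (𝓝[>] (0:ℝ)) (𝓝 L) → c ≤ L

/-- Signed distance function from `E` (positive inside). -/
def sgnDist {n : ℕ} (E : Set (Euc n)) (x : Euc n) : ℝ :=
  Metric.infDist x Eᶜ - Metric.infDist x E

/-- The Almgren–Taylor–Wang energy `Per_K(G) − (1/h)∫_G d_E`. -/
def atwEnergy {n : ℕ} (K : Euc n → ℝ) (E : Set (Euc n)) (h : ℝ) (G : Set (Euc n)) : ℝ :=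
  (perKtot K G).toReal - (1/h) * ∫ x in G, sgnDist E x

/-- `T` is an ATW minimizer for `E` at step `h`: it minimizes the ATW energy among all
measurable sets (competitors with infinite energy being irrelevant). -/
def ATWMin {n : ℕ} (K : Euc n → ℝ) (E : Set (Euc n)) (h : ℝ) (T : Set (Euc n)) : Prop :=
  MeasurableSet T ∧ perKtot K T < ⊤ ∧ IntegrableOn (sgnDist E) T ∧
  ∀ G : Set (Euc n), MeasurableSet G → perKtot K G < ⊤ → IntegrableOn (sgnDist E) G →
    atwEnergy K E h T ≤ atwEnergy K E h G

/-- The set of Lebesgue density-one points of `T`. -/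
def densityPts {n : ℕ} (T : Set (Euc n)) : Set (Euc n) :=
  {x | Tendsto (fun ρ : ℝ =>
      volume (T ∩ Metric.closedBall x ρ) / volume (Metric.closedBall x ρ))
    (𝓝[>] (0:ℝ)) (𝓝 1)}

/-- The nonlocal functional `J_K(v) = ½∬ |v(x)−v(y)| K(x−y) dx dy`. -/
def JK {n : ℕ} (K : Euc n → ℝ) (v : Euc n → ℝ) : ℝ≥0∞ :=
  (1/2 : ℝ≥0∞) * ∫⁻ x : Euc n, ∫⁻ y : Euc n,
    ENNReal.ofReal |v x - v y| * ENNReal.ofReal (K (x - y))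

end


section AuxRetraction
open MeasureTheory Set Filter Metric Topology
open scoped ENNReal

variable {n : ℕ}

private noncomputable def indE (s : Set (Euc n)) (x : Euc n) : ℝ≥0∞ := s.indicator (fun _ => 1) x

private lemma indE_meas {s : Set (Euc n)} (hs : MeasurableSet s) : Measurable (indE s) :=
  measurable_const.indicator hs

private lemma indE_mul (s : Set (Euc n)) (g : Euc n → ℝ≥0∞) (x : Euc n) :
    s.indicator g x = indE s x * g x := by
  by_cases h : x ∈ s <;> simp [indE, h]

private lemma kmeas {K : Euc n → ℝ} (hK : Measurable K) (x : Euc n) :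
    Measurable fun y => ENNReal.ofReal (K (x - y)) :=
  ENNReal.measurable_ofReal.comp (hK.comp (measurable_const.sub measurable_id))

private lemma meas_inner {K : Euc n → ℝ} (hK : Measurable K) (s : Set (Euc n)) :
    Measurable fun x => ∫⁻ y in s, ENNReal.ofReal (K (x - y)) := by
  have h : Measurable fun p : Euc n × Euc n => ENNReal.ofReal (K (p.1 - p.2)) :=
    ENNReal.measurable_ofReal.comp (hK.comp (measurable_fst.sub measurable_snd))
  exact h.lintegral_prod_right'

private lemma perKtot_repr {K : Euc n → ℝ} (hK : Measurable K) {B : Set (Euc n)}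
    (hB : MeasurableSet B) :
    perKtot K B = ∫⁻ x, indE B x * ∫⁻ y, indE Bᶜ y * ENNReal.ofReal (K (x - y)) := by
  unfold perKtot
  rw [← lintegral_indicator hB]
  refine lintegral_congr fun x => ?_
  rw [indE_mul]
  congr 1
  rw [← lintegral_indicator hB.compl]
  exact lintegral_congr fun y => indE_mul _ _ _

private lemma indE_submod (S A : Set (Euc n)) (x y : Euc n) (c : ℝ≥0∞) :
    indE (S ∩ A) x * (indE (S ∩ A)ᶜ y * c) + indE (S ∪ A) x * (indE (S ∪ A)ᶜ y * c) ≤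
      indE S x * (indE Sᶜ y * c) + indE A x * (indE Aᶜ y * c) := by
  by_cases hxS : x ∈ S <;> by_cases hxA : x ∈ A <;> by_cases hyS : y ∈ S <;>
    by_cases hyA : y ∈ A <;>
    simp [indE, Set.indicator_apply, hxS, hxA, hyS, hyA]

private lemma perKtot_submod {K : Euc n → ℝ} (hK : Measurable K) {S A : Set (Euc n)}
    (hS : MeasurableSet S) (hA : MeasurableSet A) :
    perKtot K (S ∩ A) + perKtot K (S ∪ A) ≤ perKtot K S + perKtot K A := by
  rw [perKtot_repr hK (hS.inter hA), perKtot_repr hK (hS.union hA), perKtot_repr hK hS,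
    perKtot_repr hK hA]
  have hmeas : ∀ (B : Set (Euc n)), MeasurableSet B →
      Measurable fun x => indE B x * ∫⁻ y, indE Bᶜ y * ENNReal.ofReal (K (x - y)) := by
    intro B hB
    exact (indE_meas hB).mul ((((indE_meas hB.compl).comp measurable_snd).mul
      (ENNReal.measurable_ofReal.comp
        (hK.comp (measurable_fst.sub measurable_snd)))).lintegral_prod_right')
  rw [← lintegral_add_left (hmeas _ (hS.inter hA)), ← lintegral_add_left (hmeas _ hS)]
  refine lintegral_mono fun x => ?_
  have hinner : ∀ (B : Set (Euc n)), MeasurableSet B →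
      indE B x * ∫⁻ y, indE Bᶜ y * ENNReal.ofReal (K (x - y)) =
        ∫⁻ y, indE B x * (indE Bᶜ y * ENNReal.ofReal (K (x - y))) := by
    intro B hB
    exact (lintegral_const_mul _ ((indE_meas hB.compl).mul (kmeas hK x))).symm
  rw [hinner _ (hS.inter hA), hinner _ (hS.union hA), hinner _ hS, hinner _ hA,
    ← lintegral_add_left (f := fun y => indE (S ∩ A) x * (indE (S ∩ A)ᶜ y * ENNReal.ofReal (K (x - y)))) (by exact measurable_const.mul ((indE_meas (hS.inter hA).compl).mul (kmeas hK x))),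
    ← lintegral_add_left (f := fun y => indE S x * (indE Sᶜ y * ENNReal.ofReal (K (x - y)))) (by exact measurable_const.mul ((indE_meas hS.compl).mul (kmeas hK x)))]
  exact lintegral_mono fun y => indE_submod S A x y _

private lemma perKtot_translate {K : Euc n → ℝ} (hK : Measurable K) {B : Set (Euc n)}
    (hB : MeasurableSet B) (c : Euc n) :
    perKtot K ((fun x => x + c) ⁻¹' B) = perKtot K B := by
  have hB' : MeasurableSet ((fun x => x + c) ⁻¹' B) := hB.preimage (measurable_add_const c)
  rw [perKtot_repr hK hB', perKtot_repr hK hB]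
  have hindc : ∀ (s : Set (Euc n)) (x : Euc n),
      indE ((fun x => x + c) ⁻¹' s) x = indE s (x + c) := by
    intro s x; by_cases hx : x + c ∈ s <;>
      simp [indE, Set.indicator_apply, Set.mem_preimage, hx]
  have hcompl : ((fun x => x + c) ⁻¹' B)ᶜ = (fun x => x + c) ⁻¹' Bᶜ := rfl
  calc ∫⁻ x, indE ((fun x => x + c) ⁻¹' B) x *
        ∫⁻ y, indE ((fun x => x + c) ⁻¹' B)ᶜ y * ENNReal.ofReal (K (x - y))
      = ∫⁻ x, indE B (x + c) *
          ∫⁻ y, indE Bᶜ (y + c) * ENNReal.ofReal (K ((x + c) - (y + c))) := by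
        refine lintegral_congr fun x => ?_
        rw [hindc]
        congr 1
        refine lintegral_congr fun y => ?_
        rw [hcompl, hindc, add_sub_add_right_eq_sub]
    _ = ∫⁻ x, indE B x * ∫⁻ y, indE Bᶜ (y + c) * ENNReal.ofReal (K (x - (y + c))) :=
        lintegral_add_right_eq_self
          (fun u => indE B u * ∫⁻ y, indE Bᶜ (y + c) * ENNReal.ofReal (K (u - (y + c)))) c
    _ = ∫⁻ x, indE B x * ∫⁻ y, indE Bᶜ y * ENNReal.ofReal (K (x - y)) := by
        refine lintegral_congr fun x => ?_
        congr 1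
        exact lintegral_add_right_eq_self (fun v => indE Bᶜ v * ENNReal.ofReal (K (x - v))) c

private lemma perKtot_split {K : Euc n → ℝ} (hK : Measurable K) {B U : Set (Euc n)}
    (hB : MeasurableSet B) (hU : MeasurableSet U) :
    perKtot K B = perK K B U +
      ∫⁻ x in B \ U, ∫⁻ y in (U ∪ B)ᶜ, ENNReal.ofReal (K (x - y)) := by
  have hsplit : Bᶜ = (U \ B) ∪ (U ∪ B)ᶜ := by
    ext y; by_cases hy : y ∈ U <;> by_cases hy' : y ∈ B <;> simp [hy, hy']
  have hdisj : Disjoint (U \ B) (U ∪ B)ᶜ :=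
    Set.disjoint_left.2 fun y hy hy' => hy' (Or.inl hy.1)
  have h1 : ∫⁻ x in B, ∫⁻ y in Bᶜ, ENNReal.ofReal (K (x - y)) =
      (∫⁻ x in B, ∫⁻ y in U \ B, ENNReal.ofReal (K (x - y))) +
        ∫⁻ x in B, ∫⁻ y in (U ∪ B)ᶜ, ENNReal.ofReal (K (x - y)) := by
    rw [← lintegral_add_left (meas_inner hK _)]
    refine lintegral_congr fun x => ?_
    rw [hsplit, lintegral_union (hU.union hB).compl hdisj]
  have h2 : ∫⁻ x in B, ∫⁻ y in (U ∪ B)ᶜ, ENNReal.ofReal (K (x - y)) =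
      (∫⁻ x in B ∩ U, ∫⁻ y in (U ∪ B)ᶜ, ENNReal.ofReal (K (x - y))) +
        ∫⁻ x in B \ U, ∫⁻ y in (U ∪ B)ᶜ, ENNReal.ofReal (K (x - y)) := by
    rw [← lintegral_union (hB.diff hU) (Set.disjoint_left.2 fun a ha ha' => ha'.2 ha.2),
      Set.inter_union_diff]
  unfold perKtot perK
  rw [h1, h2, add_assoc]

private lemma perKtot_congr_ae {K : Euc n → ℝ} {S B : Set (Euc n)} (h : S =ᵐ[volume] B) :
    perKtot K S = perKtot K B := by
  have hc : Sᶜ =ᵐ[volume] Bᶜ := by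
    rw [ae_eq_set] at h; refine (ae_eq_set (s := Sᶜ) (t := Bᶜ)).2 ?_
    have e1 : Sᶜ \ Bᶜ = B \ S := by ext x; simp [Set.mem_diff]; tauto
    have e2 : Bᶜ \ Sᶜ = S \ B := by ext x; simp [Set.mem_diff]; tauto
    rw [e1, e2]
    exact ⟨h.2, h.1⟩
  unfold perKtot
  rw [setLIntegral_congr h]
  exact lintegral_congr fun x => setLIntegral_congr hc

end AuxRetraction

open MeasureTheory Set Filter Metric Topology
open scoped ENNReal

/-- one ATW step starting from a strongly `K`-outward minimizing set with
constant `δ` is contained in `E` even after translating by any vector of norm `< δh`;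
in particular if `E` has empty interior the ATW minimizer is null. -/
theorem atw_strong_retraction {n : ℕ} (K : Euc n → ℝ) (hK : KernelOK K)
    (Ω E T : Set (Euc n)) (δ h : ℝ) (hδ : 0 < δ) (hh : 0 < h) (hΩ : IsOpen Ω)
    (hEcpt : IsCompact E) (hEfin : perKtot K E < ⊤)
    (hEmin : StrongOutMin K δ E Ω)
    (hnbhd : {x : Euc n | Metric.infDist x E < δ * h} ⊆ Ω)
    (hT : ATWMin K E h T) (hTE : volume (T \ E) = 0) :
    (∀ z : Euc n, ‖z‖ < δ * h → volume (((fun x => x + z) '' T) \ E) = 0) ∧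
    (interior E = ∅ → volume T = 0) := by
  classical
  have hEmeas : MeasurableSet E := hEcpt.isClosed.measurableSet
  have hTmeas : MeasurableSet T := hT.1
  have hΩmeas : MeasurableSet Ω := hΩ.measurableSet
  have hdcont : Continuous (sgnDist E) :=
    (continuous_infDist_pt Eᶜ).sub (continuous_infDist_pt E)
  have hdint : IntegrableOn (sgnDist E) E volume :=
    hdcont.continuousOn.integrableOn_compact hEcpt
  -- the main step, in preimage form
  have key : ∀ z : Euc n, ‖z‖ < δ * h → volume (T \ ((fun x => x + z) ⁻¹' E)) = 0 := by
    intro z hz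
    set S : Set (Euc n) := T ∩ E with hSdef
    set A : Set (Euc n) := (fun x => x + z) ⁻¹' E with hAdef
    set W : Set (Euc n) := (fun x => x + -z) ⁻¹' S with hWdef
    set G : Set (Euc n) := S ∩ A with hGdef
    set F : Set (Euc n) := E ∪ W with hFdef
    have hSmeas : MeasurableSet S := hTmeas.inter hEmeas
    have hAmeas : MeasurableSet A := hEmeas.preimage (measurable_add_const z)
    have hWmeas : MeasurableSet W := hSmeas.preimage (measurable_add_const (-z))
    have hGmeas : MeasurableSet G := hSmeas.inter hAmeas
    have hFmeas : MeasurableSet F := hEmeas.union hWmeas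
    -- ae facts
    have hSTae : S =ᵐ[volume] T := by
      rw [ae_eq_set]
      constructor
      · rw [show S \ T = ∅ from Set.diff_eq_empty.2 Set.inter_subset_left]
        exact measure_empty
      · rw [Set.diff_self_inter]; exact hTE
    have hPS : perKtot K S = perKtot K T := perKtot_congr_ae hSTae
    -- geometry of W
    have hpreE_eq_img : (fun x : Euc n => x + -z) ⁻¹' E = (fun x => x + z) '' E := by
      ext y
      simp only [Set.mem_preimage, Set.mem_image]
      constructor
      · intro hy; exact ⟨y + -z, hy, by abel⟩
      · rintro ⟨x, hx, rfl⟩; simpa [add_assoc] using hx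
    have hpreEcpt : IsCompact ((fun x : Euc n => x + -z) ⁻¹' E) := by
      rw [hpreE_eq_img]; exact hEcpt.image (continuous_add_right z)
    have hpreEΩ : (fun x : Euc n => x + -z) ⁻¹' E ⊆ Ω := by
      intro y hy
      apply hnbhd
      have h1 : infDist y E ≤ dist y (y + -z) := infDist_le_dist_of_mem hy
      have h2 : dist y (y + -z) = ‖z‖ := by rw [dist_self_add_right, norm_neg]
      exact lt_of_le_of_lt (by rw [← h2]; exact h1) hz
    have hWsub : W ⊆ (fun x : Euc n => x + -z) ⁻¹' E :=
      Set.preimage_mono Set.inter_subset_right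
    have hWΩ : W ⊆ Ω := hWsub.trans hpreEΩ
    have hclW : closure W ⊆ (fun x : Euc n => x + -z) ⁻¹' E :=
      closure_minimal hWsub (hEcpt.isClosed.preimage (continuous_add_right (-z)))
    -- strong minimality competitor
    have hFE : F \ E = (fun x : Euc n => x + -z) ⁻¹' (S \ A) := by
      ext y
      have hyz : y + -z + z = y := neg_add_cancel_right y z
      constructor
      · rintro ⟨hE | hW, hyE⟩
        · exact absurd hE hyE
        · exact ⟨hW, fun hA => hyE (by rwa [Set.mem_preimage, hyz] at hA)⟩
      · rintro ⟨hS, hA⟩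
        refine ⟨Or.inr hS, fun hyE => hA ?_⟩
        rw [Set.mem_preimage, hyz]
        exact hyE
    have hcpt : CptIn (F \ E) Ω := by
      constructor
      · refine IsCompact.of_isClosed_subset hpreEcpt isClosed_closure ?_
        refine (closure_mono ?_).trans hclW
        rw [hFdef, Set.union_diff_left]
        exact Set.diff_subset
      · refine (closure_mono ?_).trans (hclW.trans hpreEΩ)
        rw [hFdef, Set.union_diff_left]
        exact Set.diff_subset
    -- strong outward minimality applied to F
    have hSM := hEmin F hFmeas Set.subset_union_left hcpt
    have hmF : volume (F \ E) = volume (S \ A) := by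
      rw [hFE]
      exact (measurePreserving_add_right volume (-z)).measure_preimage
        ((hSmeas.diff hAmeas).nullMeasurableSet)
    -- localization: pass from perK in Ω to perKtot
    have hFΩ : F \ Ω = E \ Ω := by
      ext y
      simp only [hFdef, Set.mem_diff, Set.mem_union]
      constructor
      · rintro ⟨hEW, hΩ'⟩
        exact ⟨hEW.resolve_right fun hW => hΩ' (hWΩ hW), hΩ'⟩
      · rintro ⟨hE, hΩ'⟩
        exact ⟨Or.inl hE, hΩ'⟩
    have hΩF : Ω ∪ F = Ω ∪ E := by
      ext y
      simp only [hFdef, Set.mem_union]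
      constructor
      · rintro (h | h | h)
        · exact Or.inl h
        · exact Or.inr h
        · exact Or.inl (hWΩ h)
      · rintro (h | h)
        · exact Or.inl h
        · exact Or.inr (Or.inl h)
    have hlocE := perKtot_split (K := K) hK.1 hEmeas hΩmeas
    have hlocF := perKtot_split (K := K) hK.1 hFmeas hΩmeas
    rw [hFΩ, hΩF] at hlocF
    -- strong minimality in terms of total perimeters
    have hSM2 : perKtot K E + ENNReal.ofReal δ * volume (S \ A) ≤ perKtot K F := by
      rw [hlocE, hlocF]
      calc perK K E Ω + (∫⁻ x in E \ Ω, ∫⁻ y in (Ω ∪ E)ᶜ, ENNReal.ofReal (K (x - y)))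
            + ENNReal.ofReal δ * volume (S \ A)
          = (perK K E Ω + ENNReal.ofReal δ * volume (S \ A))
            + ∫⁻ x in E \ Ω, ∫⁻ y in (Ω ∪ E)ᶜ, ENNReal.ofReal (K (x - y)) := by ring
        _ ≤ perK K F Ω + ∫⁻ x in E \ Ω, ∫⁻ y in (Ω ∪ E)ᶜ, ENNReal.ofReal (K (x - y)) := by
            refine add_le_add_left ?_ _
            rw [← hmF]
            exact hSM
    -- translation invariance
    have hWS : perKtot K W = perKtot K S := perKtot_translate hK.1 hSmeas (-z)
    have hpre : ((fun x : Euc n => x + z) ⁻¹' (E ∩ W)) = G := by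
      ext x
      simp only [Set.mem_preimage, Set.mem_inter_iff, hWdef, hGdef, hAdef,
        add_neg_cancel_right]
      tauto
    have hGEW : perKtot K G = perKtot K (E ∩ W) := by
      have h := perKtot_translate (K := K) hK.1 (hEmeas.inter hWmeas) z
      rw [hpre] at h
      exact h
    -- submodularity
    have hsubmod := perKtot_submod (K := K) hK.1 hEmeas hWmeas
    -- finiteness
    have hGfin : perKtot K G < ⊤ := by
      rw [hGEW]
      refine lt_of_le_of_lt (le_trans le_self_add hsubmod) (ENNReal.add_lt_top.2 ⟨hEfin, ?_⟩)
      rw [hWS, hPS]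
      exact hT.2.1
    -- the key perimeter inequality
    have hchain : perKtot K E + (perKtot K G + ENNReal.ofReal δ * volume (S \ A)) ≤
        perKtot K E + perKtot K S := by
      calc perKtot K E + (perKtot K G + ENNReal.ofReal δ * volume (S \ A))
          = perKtot K G + (perKtot K E + ENNReal.ofReal δ * volume (S \ A)) := by ring
        _ ≤ perKtot K G + perKtot K F := add_le_add_right hSM2 _
        _ = perKtot K (E ∩ W) + perKtot K (E ∪ W) := by rw [hGEW, hFdef]
        _ ≤ perKtot K E + perKtot K W := hsubmod
        _ = perKtot K E + perKtot K S := by rw [hWS]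
    have hstar2 : perKtot K G + ENNReal.ofReal δ * volume (S \ A) ≤ perKtot K T := by
      rw [← hPS]
      exact (ENNReal.add_le_add_iff_left hEfin.ne).1 hchain
    -- ATW comparison
    have hGsubT : G ⊆ T := fun x hx => hx.1.1
    have hGsubE : G ⊆ E := fun x hx => hx.1.2
    have hGint : IntegrableOn (sgnDist E) G volume := hdint.mono_set hGsubE
    have hcomp := hT.2.2.2 G hGmeas hGfin hGint
    unfold atwEnergy at hcomp
    have hsplitI := integral_diff hGmeas hT.2.2.1 hGsubT (f := sgnDist E)
    have hTGae : (T \ G : Set (Euc n)) =ᵐ[volume] (S \ A) := by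
      refine (ae_eq_set (s := T \ G) (t := S \ A)).2 ?_
      constructor
      · refine measure_mono_null ?_ hTE
        rintro x ⟨⟨hxT, hxG⟩, hxSA⟩
        refine ⟨hxT, fun hxE => ?_⟩
        by_cases hxA : x ∈ A
        · exact hxG ⟨⟨hxT, hxE⟩, hxA⟩
        · exact hxSA ⟨⟨hxT, hxE⟩, hxA⟩
      · have hsub : S \ A ⊆ T \ G := fun x hx => ⟨hx.1.1, fun hG => hx.2 hG.2⟩
        rw [Set.diff_eq_empty.2 hsub]
        exact measure_empty
    have hIeq : ∫ x in T \ G, sgnDist E x = ∫ x in S \ A, sgnDist E x :=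
      setIntegral_congr_set hTGae
    have hSAmeas : MeasurableSet (S \ A) := hSmeas.diff hAmeas
    have hSAsubE : S \ A ⊆ E := fun x hx => hx.1.2
    have hSAfin : volume (S \ A) < ⊤ :=
      lt_of_le_of_lt (measure_mono hSAsubE) hEcpt.measure_lt_top
    have hptbd : ∀ x ∈ S \ A, sgnDist E x ≤ ‖z‖ := by
      rintro x ⟨⟨hxT, hxE⟩, hxA⟩
      have h1 : infDist x E = 0 := infDist_zero_of_mem hxE
      have h2 : infDist x Eᶜ ≤ ‖z‖ := by
        have hmem : x + z ∈ Eᶜ := hxA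
        calc infDist x Eᶜ ≤ dist x (x + z) := infDist_le_dist_of_mem hmem
          _ = ‖z‖ := dist_self_add_right z x
      show infDist x Eᶜ - infDist x E ≤ ‖z‖
      rw [h1, sub_zero]
      exact h2
    have hIbd : ∫ x in S \ A, sgnDist E x ≤ ‖z‖ * (volume (S \ A)).toReal := by
      calc ∫ x in S \ A, sgnDist E x ≤ ∫ _x in S \ A, ‖z‖ :=
            setIntegral_mono_on (hdint.mono_set hSAsubE)
              (integrableOn_const hSAfin.ne) hSAmeas hptbd
        _ = (volume (S \ A)).toReal * ‖z‖ := by rw [setIntegral_const, smul_eq_mul, measureReal_def]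
        _ = ‖z‖ * (volume (S \ A)).toReal := mul_comm _ _
    -- put everything together in the reals
    set mt : ℝ := (volume (S \ A)).toReal with hmtdef
    have hmtnn : 0 ≤ mt := ENNReal.toReal_nonneg
    have hreal2 : (perKtot K G).toReal + δ * mt ≤ (perKtot K T).toReal := by
      have h' := ENNReal.toReal_mono hT.2.1.ne hstar2
      rwa [ENNReal.toReal_add hGfin.ne (ENNReal.mul_ne_top ENNReal.ofReal_ne_top hSAfin.ne),
        ENNReal.toReal_mul, ENNReal.toReal_ofReal hδ.le] at h'
    have hITG : (∫ x in T, sgnDist E x) - ∫ x in G, sgnDist E x ≤ ‖z‖ * mt := by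
      rw [← hsplitI, hIeq]
      exact hIbd
    have h1h : (0:ℝ) < 1 / h := by positivity
    have hmt0 : mt = 0 := by
      by_contra hne
      have hmtpos : 0 < mt := lt_of_le_of_ne hmtnn (Ne.symm hne)
      have hA' : (perKtot K T).toReal - (perKtot K G).toReal ≤
          (1 / h) * ((∫ x in T, sgnDist E x) - ∫ x in G, sgnDist E x) := by
        have e : (1 / h) * ((∫ x in T, sgnDist E x) - ∫ x in G, sgnDist E x) =
            (1 / h) * (∫ x in T, sgnDist E x) - (1 / h) * ∫ x in G, sgnDist E x := by ring
        linarith [hcomp]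
      have hB' : (1 / h) * ((∫ x in T, sgnDist E x) - ∫ x in G, sgnDist E x) ≤
          (1 / h) * (‖z‖ * mt) := mul_le_mul_of_nonneg_left hITG h1h.le
      have hC' : δ * mt ≤ (1 / h) * (‖z‖ * mt) := by linarith
      have hD' : δ * h * mt ≤ ‖z‖ * mt := by
        have h2 := mul_le_mul_of_nonneg_right hC' hh.le
        have h3 : (1 / h) * (‖z‖ * mt) * h = ‖z‖ * mt := by field_simp
        nlinarith
      have h4 : ‖z‖ * mt < δ * h * mt := mul_lt_mul_of_pos_right hz hmtpos
      linarith
    have hm0 : volume (S \ A) = 0 :=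
      ((ENNReal.toReal_eq_zero_iff _).1 hmt0).resolve_right hSAfin.ne
    refine measure_mono_null (fun x hx => ?_) (measure_union_null hTE hm0)
    by_cases hxE : x ∈ E
    · exact Or.inr ⟨⟨hx.1, hxE⟩, hx.2⟩
    · exact Or.inl ⟨hx.1, hxE⟩
  -- transfer to images
  have himg : ∀ z : Euc n,
      (fun x => x + z) '' T \ E = (fun y => y + -z) ⁻¹' (T \ ((fun x => x + z) ⁻¹' E)) := by
    intro z
    ext y
    simp only [Set.mem_diff, Set.mem_image, Set.mem_preimage]
    constructor
    · rintro ⟨⟨x, hxT, rfl⟩, hyE⟩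
      refine ⟨by simpa using hxT, ?_⟩
      simpa [add_assoc] using hyE
    · rintro ⟨hyT, hyE⟩
      exact ⟨⟨y + -z, hyT, by abel⟩, by simpa [add_assoc] using hyE⟩
  have keyimg : ∀ z : Euc n, ‖z‖ < δ * h → volume ((fun x => x + z) '' T \ E) = 0 := by
    intro z hz
    rw [himg z, (measurePreserving_add_right volume (-z)).measure_preimage
      ((hTmeas.diff (hEmeas.preimage (measurable_add_const z))).nullMeasurableSet)]
    exact key z hz
  refine ⟨keyimg, ?_⟩
  -- second part: empty interior forces the minimizer to be null
  intro hint
  by_contra hvol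
  set M : Set (Euc n × Euc n) := {p | p.1 ∈ T ∧ ‖p.2‖ < δ * h ∧ p.1 + p.2 ∉ E} with hMdef
  have hMmeas : MeasurableSet M := by
    have h1 : MeasurableSet {p : Euc n × Euc n | p.1 ∈ T} := measurable_fst hTmeas
    have h2 : MeasurableSet {p : Euc n × Euc n | ‖p.2‖ < δ * h} :=
      measurableSet_lt measurable_snd.norm measurable_const
    have h3 : MeasurableSet {p : Euc n × Euc n | p.1 + p.2 ∈ E} :=
      (measurable_fst.add measurable_snd) hEmeas
    rw [hMdef, Set.setOf_and, Set.setOf_and]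
    exact h1.inter (h2.inter h3.compl)
  have hM0 : (volume.prod volume) M = 0 := by
    rw [Measure.prod_apply_symm hMmeas]
    have hslice : ∀ z : Euc n, volume ((fun x => (x, z)) ⁻¹' M) = 0 := by
      intro z
      by_cases hz : ‖z‖ < δ * h
      · have : (fun x => (x, z)) ⁻¹' M = T \ ((fun x => x + z) ⁻¹' E) := by
          ext x
          simp [hMdef, hz, Set.mem_diff]
        rw [this]
        exact key z hz
      · have : (fun x => (x, z)) ⁻¹' M = ∅ := by
          ext x
          simp [hMdef, hz]
        rw [this]
        exact measure_empty
    calc ∫⁻ z, volume ((fun x => (x, z)) ⁻¹' M) = ∫⁻ _z : Euc n, 0 :=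
          lintegral_congr hslice
      _ = 0 := lintegral_zero
  have hae := Measure.measure_ae_null_of_prod_null hM0
  have haemem : ∀ᵐ x, volume (Prod.mk x ⁻¹' M) = 0 := hae.mono fun x hx => by simpa using hx
  set Good : Set (Euc n) := {x | volume (Prod.mk x ⁻¹' M) = 0} with hGooddef
  have hGoodc : volume Goodᶜ = 0 := by
    have := ae_iff.1 haemem
    simpa [hGooddef, Set.compl_setOf] using this
  have hTGood : volume (T ∩ Good) ≠ 0 := by
    intro h0
    apply hvol
    have h1 : volume T ≤ volume (T ∩ Good) + volume (T \ Good) := by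
      conv_lhs => rw [← Set.inter_union_diff T Good]
      exact measure_union_le _ _
    have h2 : volume (T \ Good) = 0 :=
      measure_mono_null (fun x hx => hx.2) hGoodc
    rw [h0, h2, add_zero] at h1
    exact le_antisymm h1 (zero_le)
  obtain ⟨x, hxT, hxG⟩ := nonempty_of_measure_ne_zero hTGood
  have hU : Prod.mk x ⁻¹' M = {w : Euc n | ‖w‖ < δ * h ∧ x + w ∉ E} := by
    ext w
    simp [hMdef, hxT]
  have hUopen : IsOpen {w : Euc n | ‖w‖ < δ * h ∧ x + w ∉ E} := by
    refine IsOpen.inter (isOpen_lt continuous_norm continuous_const) ?_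
    exact hEcpt.isClosed.isOpen_compl.preimage (continuous_const.add continuous_id)
  have hUempty : {w : Euc n | ‖w‖ < δ * h ∧ x + w ∉ E} = ∅ := by
    refine hUopen.eq_empty_of_measure_zero (μ := volume) ?_
    rw [← hU]
    exact hxG
  have hball : Metric.ball x (δ * h) ⊆ E := by
    intro y hy
    by_contra hyE
    have : y - x ∈ {w : Euc n | ‖w‖ < δ * h ∧ x + w ∉ E} := by
      constructor
      · rw [← dist_eq_norm]
        exact Metric.mem_ball.1 hy
      · rwa [add_sub_cancel]
    rw [hUempty] at this
    exact this
  have hxint : x ∈ interior E :=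
    mem_interior.2 ⟨Metric.ball x (δ * h), hball, Metric.isOpen_ball,
      Metric.mem_ball_self (by positivity)⟩
  rw [hint] at hxint
  exact hxint
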